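/- arXiv:1703.08762 — 5 statements merged into one kernel-verified Lean document; each statement's English description precedes it below -/
import Mathlib

section
/- A greedy schedule that at each of d steps adds the next repetition of a topic with maximal marginal benefit achieves the maximum possible group benefit among all schedules of length d. -/
/-- Group benefit of a count function `c` (a schedule given by topic counts). -/
noncomputable def groupBenefit {S T : Type*} [Fintype T] (P : Finset S)
    (req : S → T → ℕ) (c : T → ℕ) : ℝ :=
  ∑ t, ∑ s ∈ P, (min (c t) (req s t) : ℝ) / (req s t)

/-- Marginal benefit to the group of the `i`-th repetition of topic `t`. -/
noncomputable def marg {S T : Type*} (P : Finset S) (req : S → T → ℕ)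
    (t : T) (i : ℕ) : ℝ :=
  ∑ s ∈ P, if i ≤ req s t then (1 : ℝ) / req s t else 0

lemma marg_antitone {S T : Type*} (P : Finset S) (req : S → T → ℕ) (t : T)
    {i j : ℕ} (h : i ≤ j) : marg P req t j ≤ marg P req t i := by
  unfold marg
  apply Finset.sum_le_sum
  intro s _
  by_cases hj : j ≤ req s t
  · rw [if_pos hj, if_pos (h.trans hj)]
  · rw [if_neg hj]
    split
    · positivity
    · exact le_rfl

lemma groupBenefit_update {S T : Type*} [Fintype T] [DecidableEq T] (P : Finset S)
    (req : S → T → ℕ) (c : T → ℕ) (t : T) :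
    groupBenefit P req (Function.update c t (c t + 1))
      = groupBenefit P req c + marg P req t (c t + 1) := by
  unfold groupBenefit
  have key : ∀ t', (∑ s ∈ P, (min (Function.update c t (c t + 1) t') (req s t') : ℝ) / req s t')
      = (∑ s ∈ P, (min (c t') (req s t') : ℝ) / req s t')
        + (if t' = t then marg P req t (c t + 1) else 0) := by
    intro t'
    by_cases h : t' = t
    · subst h
      rw [Function.update_self, if_pos rfl, marg, ← Finset.sum_add_distrib]
      apply Finset.sum_congr rfl
      intro s _
      by_cases hr : c t' + 1 ≤ req s t'
      · rw [if_pos hr,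
          min_eq_left (by exact_mod_cast hr : ((c t' + 1 : ℕ) : ℝ) ≤ req s t'),
          min_eq_left (by exact_mod_cast Nat.le_of_succ_le hr : ((c t' : ℕ) : ℝ) ≤ req s t')]
        push_cast
        rw [add_div]
      · rw [if_neg hr, add_zero,
          min_eq_right (by exact_mod_cast (by omega : req s t' ≤ c t' + 1) : ((req s t' : ℕ) : ℝ) ≤ ((c t' + 1 : ℕ) : ℝ)),
          min_eq_right (by exact_mod_cast (by omega : req s t' ≤ c t') : ((req s t' : ℕ) : ℝ) ≤ ((c t' : ℕ) : ℝ))]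
    · rw [Function.update_of_ne h, if_neg h, add_zero]
  rw [Finset.sum_congr rfl (fun t' _ => key t'), Finset.sum_add_distrib,
    Finset.sum_ite_eq' Finset.univ t, if_pos (Finset.mem_univ t)]

lemma greedy_sum {T : Type*} [Fintype T] [DecidableEq T] (c : ℕ → T → ℕ)
    (h0 : c 0 = fun _ => 0) (d : ℕ)
    (hstep : ∀ k, k < d → ∃ t, c (k + 1) = Function.update (c k) t (c k t + 1)) :
    ∑ t, c d t = d := by
  induction d with
  | zero => simp [h0]
  | succ d ih =>
    obtain ⟨t, ht⟩ := hstep d (Nat.lt_succ_self d)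
    have ihd := ih (fun k hk => hstep k (Nat.lt_succ_of_lt hk))
    rw [ht, Finset.sum_update_of_mem (Finset.mem_univ t), Finset.sdiff_singleton_eq_erase]
    rw [← Finset.sum_erase_add Finset.univ _ (Finset.mem_univ t)] at ihd
    omega

/-- A greedy schedule that at each of `d` steps adds the next repetition of a
topic of maximal marginal benefit achieves the maximum group benefit among all
schedules of length `d`. -/
theorem greedy_schedule_optimal {S T : Type*} [Fintype T] [DecidableEq T]
    (P : Finset S) (req : S → T → ℕ) (hreq : ∀ s t, 1 ≤ req s t)
    (d : ℕ) (c : ℕ → T → ℕ)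
    (h0 : c 0 = fun _ => 0)
    (hstep : ∀ k, k < d → ∃ t, c (k + 1) = Function.update (c k) t (c k t + 1) ∧
      ∀ t', marg P req t' (c k t' + 1) ≤ marg P req t (c k t + 1)) :
    ∀ c' : T → ℕ, (∑ t, c' t) = d → groupBenefit P req c' ≤ groupBenefit P req (c d) := by
  induction d with
  | zero =>
    intro c' hc'
    have hz : ∀ t, c' t = 0 := by
      intro t
      have := Finset.sum_eq_zero_iff.mp hc' t (Finset.mem_univ t)
      exact this
    have : c' = c 0 := by funext t; rw [hz t, h0]
    rw [this]
  | succ d ih =>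
    intro c' hc'
    have hstep' : ∀ k, k < d → ∃ t, c (k + 1) = Function.update (c k) t (c k t + 1) ∧
        ∀ t', marg P req t' (c k t' + 1) ≤ marg P req t (c k t + 1) :=
      fun k hk => hstep k (Nat.lt_succ_of_lt hk)
    obtain ⟨t, hct, hmax⟩ := hstep d (Nat.lt_succ_self d)
    have hsum : ∑ t, c d t = d :=
      greedy_sum c h0 d (fun k hk => ⟨(hstep' k hk).choose, (hstep' k hk).choose_spec.1⟩)
    -- find t' with c d t' < c' t'
    have hex : ∃ t', c d t' < c' t' := by
      by_contra hcon
      push_neg at hcon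
      have h2 := Finset.sum_le_sum (s := Finset.univ) (fun t _ => hcon t)
      omega
    obtain ⟨t', ht'⟩ := hex
    set c'' := Function.update c' t' (c' t' - 1) with hc''
    have hct'' : c'' t' = c' t' - 1 := Function.update_self _ _ _
    have hfun : Function.update c'' t' (c'' t' + 1) = c' := by
      funext x
      by_cases hx : x = t'
      · subst hx; rw [Function.update_self, hct'']; omega
      · rw [Function.update_of_ne hx, hc'', Function.update_of_ne hx]
    have hsum'' : ∑ t, c'' t = d := by
      rw [hc'', Finset.sum_update_of_mem (Finset.mem_univ t'), Finset.sdiff_singleton_eq_erase]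
      rw [← Finset.sum_erase_add Finset.univ _ (Finset.mem_univ t')] at hc'
      omega
    have hIH := ih hstep' c'' hsum''
    have heq1 : groupBenefit P req c' = groupBenefit P req c'' + marg P req t' (c' t') := by
      have := groupBenefit_update P req c'' t'
      rw [hfun] at this
      rw [this, hct'']
      congr 2
      omega
    have heq2 : groupBenefit P req (c (d+1)) = groupBenefit P req (c d) + marg P req t (c d t + 1) := by
      rw [hct, groupBenefit_update]
    have hm : marg P req t' (c' t') ≤ marg P req t (c d t + 1) :=
      le_trans (marg_antitone P req t' (by omega)) (hmax t')
    rw [heq1, heq2]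
    linarith
end

section
/- The maximal group benefit achievable by a schedule of length d is a concave function of d: if opt(d) denotes the maximum of B(P,·) over schedules of length d, then opt(d+1) − opt(d) ≤ opt(d) − opt(d−1) for all d ≥ 1. -/
/-- Maximal group benefit achievable by a schedule of length `d`. -/
noncomputable def opt {S T : Type*} [Fintype T] (P : Finset S)
    (req : S → T → ℕ) (d : ℕ) : ℝ :=
  sSup {x : ℝ | ∃ c : T → ℕ, (∑ t, c t) = d ∧ x = groupBenefit P req c}

lemma groupBenefit_le {S T : Type*} [Fintype T] (P : Finset S)
    (req : S → T → ℕ) (hreq : ∀ s t, 1 ≤ req s t) (c : T → ℕ) :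
    groupBenefit P req c ≤ (Fintype.card T : ℝ) * P.card := by
  unfold groupBenefit
  calc ∑ t, ∑ s ∈ P, (min (c t) (req s t) : ℝ) / (req s t)
      ≤ ∑ _t : T, (P.card : ℝ) := by
        apply Finset.sum_le_sum
        intro t _
        calc ∑ s ∈ P, (min (c t) (req s t) : ℝ) / (req s t)
            ≤ ∑ _s ∈ P, (1 : ℝ) := by
              apply Finset.sum_le_sum
              intro s _
              have hpos : (0 : ℝ) < (req s t : ℝ) := by
                exact_mod_cast Nat.lt_of_lt_of_le Nat.zero_lt_one (hreq s t)
              rw [div_le_one hpos]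
              exact_mod_cast Nat.cast_le.mpr (min_le_right _ _)
          _ = (P.card : ℝ) := by simp
    _ = (Fintype.card T : ℝ) * P.card := by
        simp [Finset.sum_const, Finset.card_univ, mul_comm]

lemma optSet_bddAbove {S T : Type*} [Fintype T] (P : Finset S)
    (req : S → T → ℕ) (hreq : ∀ s t, 1 ≤ req s t) (d : ℕ) :
    BddAbove {x : ℝ | ∃ c : T → ℕ, (∑ t, c t) = d ∧ x = groupBenefit P req c} := by
  refine ⟨(Fintype.card T : ℝ) * P.card, ?_⟩
  rintro x ⟨c, _, rfl⟩
  exact groupBenefit_le P req hreq c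

lemma optSet_nonempty {S T : Type*} [Fintype T] [Nonempty T] (P : Finset S)
    (req : S → T → ℕ) (d : ℕ) :
    ({x : ℝ | ∃ c : T → ℕ, (∑ t, c t) = d ∧ x = groupBenefit P req c}).Nonempty := by
  classical
  obtain ⟨t₀⟩ := ‹Nonempty T›
  refine ⟨groupBenefit P req (fun t => if t = t₀ then d else 0), fun t => if t = t₀ then d else 0, ?_, rfl⟩
  simp

/-- Key exchange inequality. -/
lemma key_ineq {S T : Type*} [Fintype T] [Nonempty T]
    (P : Finset S) (req : S → T → ℕ) (hreq : ∀ s t, 1 ≤ req s t)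
    (d : ℕ) (hd : 1 ≤ d) (cp cm : T → ℕ)
    (hp : (∑ t, cp t) = d + 1) (hm : (∑ t, cm t) = d - 1) :
    groupBenefit P req cp + groupBenefit P req cm ≤ opt P req d + opt P req d := by
  classical
  -- find a topic where cp exceeds cm
  have hlt : ∑ t, cm t < ∑ t, cp t := by omega
  obtain ⟨t₀, -, ht₀⟩ := Finset.exists_lt_of_sum_lt hlt
  have hcppos : 1 ≤ cp t₀ := by omega
  set a : T → ℕ := Function.update cp t₀ (cp t₀ - 1) with ha
  set b : T → ℕ := Function.update cm t₀ (cm t₀ + 1) with hb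
  have hsplitp : ∑ t, cp t = cp t₀ + ∑ t ∈ Finset.univ.erase t₀, cp t :=
    (Finset.add_sum_erase _ _ (Finset.mem_univ t₀)).symm
  have hsplitm : ∑ t, cm t = cm t₀ + ∑ t ∈ Finset.univ.erase t₀, cm t :=
    (Finset.add_sum_erase _ _ (Finset.mem_univ t₀)).symm
  have hsa : (∑ t, a t) = d := by
    rw [ha, Finset.sum_update_of_mem (Finset.mem_univ t₀),
      Finset.sdiff_singleton_eq_erase]
    omega
  have hsb : (∑ t, b t) = d := by
    rw [hb, Finset.sum_update_of_mem (Finset.mem_univ t₀),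
      Finset.sdiff_singleton_eq_erase]
    omega
  have hmain : groupBenefit P req cp + groupBenefit P req cm ≤
      groupBenefit P req a + groupBenefit P req b := by
    unfold groupBenefit
    rw [← Finset.sum_add_distrib, ← Finset.sum_add_distrib]
    apply Finset.sum_le_sum
    intro t _
    rw [← Finset.sum_add_distrib, ← Finset.sum_add_distrib]
    apply Finset.sum_le_sum
    intro s _
    have hpos : (0 : ℝ) < (req s t : ℝ) := by
      exact_mod_cast Nat.lt_of_lt_of_le Nat.zero_lt_one (hreq s t)
    rw [← add_div, ← add_div]
    have hnat : min (cp t) (req s t) + min (cm t) (req s t) ≤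
        min (a t) (req s t) + min (b t) (req s t) := by
      by_cases h : t = t₀
      · subst h
        simp only [ha, hb, Function.update_self]
        omega
      · simp [ha, hb, Function.update_of_ne h]
    exact div_le_div_of_nonneg_right (by exact_mod_cast hnat) hpos.le
  have hbdd := optSet_bddAbove P req hreq d
  have hta : groupBenefit P req a ≤ opt P req d := le_csSup hbdd ⟨a, hsa, rfl⟩
  have htb : groupBenefit P req b ≤ opt P req d := le_csSup hbdd ⟨b, hsb, rfl⟩
  linarith

/-- The maximal group benefit is a concave function of the deadline `d`:
`opt(d+1) − opt(d) ≤ opt(d) − opt(d−1)` for all `d ≥ 1`. -/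
theorem opt_concave {S T : Type*} [Fintype T] [Nonempty T]
    (P : Finset S) (req : S → T → ℕ) (hreq : ∀ s t, 1 ≤ req s t)
    (d : ℕ) (hd : 1 ≤ d) :
    opt P req (d + 1) - opt P req d ≤ opt P req d - opt P req (d - 1) := by
  have h1 : opt P req (d + 1) ≤ (opt P req d + opt P req d) - opt P req (d - 1) := by
    apply csSup_le (optSet_nonempty P req (d + 1))
    rintro x ⟨cp, hp, rfl⟩
    have h2 : opt P req (d - 1) ≤ (opt P req d + opt P req d) - groupBenefit P req cp := by
      apply csSup_le (optSet_nonempty P req (d - 1))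
      rintro y ⟨cm, hm, rfl⟩
      have := key_ineq P req hreq d hd cp cm hp hm
      linarith
    linarith
  linarith
end

section
/- For a single student s, the optimal schedule of length d has benefit equal to the maximum over count functions c of Σ_t min(c_t, req(s,t))/req(s,t), and this maximum is achieved by a greedy rule that repeatedly adds a topic with the smallest requirement among topics not yet fully covered (adding all req(s,t) repetitions of topics in increasing order of req(s,t) as budget allows, then a partial block). -/
private lemma key_frac (x c r R : ℝ) (hr : 0 < r) (hR : 0 < R)
    (hcase : (x ≤ c ∧ r ≤ R) ∨ (c ≤ x ∧ R ≤ r)) :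
    x / r ≤ c / r + (x - c) / R := by
  rcases hcase with ⟨h1, h2⟩ | ⟨h1, h2⟩
  · rw [div_add_div _ _ (ne_of_gt hr) (ne_of_gt hR), div_le_div_iff₀ hr (by positivity)]
    nlinarith [mul_nonneg (mul_nonneg (sub_nonneg.2 h1) (sub_nonneg.2 h2)) hr.le]
  · rw [div_add_div _ _ (ne_of_gt hr) (ne_of_gt hR), div_le_div_iff₀ hr (by positivity)]
    nlinarith [mul_nonneg (mul_nonneg (sub_nonneg.2 h1) (sub_nonneg.2 h2)) hr.le]

/-- For a single student, the greedy schedule that processes topics in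
nondecreasing order of requirement—fully covering each topic as long as budget
remains, then a partial block—achieves the maximum benefit
`∑_t min(c_t, req t)/req t` among all count functions summing to `d`. -/
theorem single_student_greedy_optimal {T : Type*} [Fintype T]
    (req : T → ℕ) (hreq : ∀ t, 1 ≤ req t) (d : ℕ) (hd : d ≤ ∑ t, req t)
    (L : List T) (hnodup : L.Nodup) (hcomplete : ∀ t, t ∈ L)
    (hsorted : L.Pairwise (fun a b => req a ≤ req b))
    (c : T → ℕ)
    (hc : ∀ i : Fin L.length,
      c (L.get i) = min (req (L.get i)) (d - ((L.take i.1).map req).sum)) :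
    (∑ t, c t) = d ∧
      ∀ c' : T → ℕ, (∑ t, c' t) = d →
        ∑ t, (min (c' t) (req t) : ℝ) / (req t)
          ≤ ∑ t, (min (c t) (req t) : ℝ) / (req t) := by
  classical
  set n := L.length with hn
  set S : ℕ → ℕ := fun k => ((L.take k).map req).sum with hSdef
  -- basic facts about S
  have hS_succ : ∀ i : Fin n, S (i.1 + 1) = S i.1 + req (L.get i) := by
    intro i
    simp only [hSdef]
    rw [List.map_take, List.map_take, List.sum_take_succ (L.map req) i.1 (by rw [List.length_map]; exact i.2)]
    congr 1
    simp [List.getElem_map]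
  have hS_mono : Monotone S := by
    apply monotone_nat_of_le_succ
    intro k
    by_cases hk : k < n
    · have h := hS_succ ⟨k, hk⟩
      simp only [Fin.val_mk] at h
      omega
    · simp only [hSdef]
      rw [List.take_of_length_le (by omega), List.take_of_length_le (by omega)]
  have hS0 : S 0 = 0 := by simp [hSdef]
  have hSn : S n = ∑ t, req t := by
    show ((L.take L.length).map req).sum = _
    rw [List.take_length, ← List.sum_toFinset _ hnodup]
    apply Finset.sum_congr _ (fun _ _ => rfl)
    ext t; simp [hcomplete t]
  -- the equivalence Fin n ≃ T
  let e := hnodup.getEquivOfForallMemList L hcomplete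
  have he : ∀ i, e i = L.get i := fun i => rfl
  have hsum : ∀ f : T → ℝ, ∑ t, f t = ∑ i : Fin n, f (L.get i) := by
    intro f
    rw [← Equiv.sum_comp e f]
    exact Finset.sum_congr rfl (fun i _ => by rw [he i])
  have hsumN : ∀ f : T → ℕ, ∑ t, f t = ∑ i : Fin n, f (L.get i) := by
    intro f
    rw [← Equiv.sum_comp e f]
    exact Finset.sum_congr rfl (fun i _ => by rw [he i])
  -- Part 1 : sum c = d
  have part1 : (∑ t, c t) = d := by
    rw [hsumN]
    have : ∀ i : Fin n, c (L.get i) = min d (S (i.1+1)) - min d (S i.1) := by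
      intro i
      rw [hc i, hS_succ i]
      simp only [hSdef]
      omega
    rw [Finset.sum_congr rfl (fun i _ => this i)]
    rw [Fin.sum_univ_eq_sum_range (fun k => min d (S (k+1)) - min d (S k)) n]
    rw [Finset.sum_range_tsub (f := fun k => min d (S k))
      (fun a b hab => min_le_min le_rfl (hS_mono hab))]
    rw [hS0, hSn]
    omega
  refine ⟨part1, ?_⟩
  -- c t ≤ req t
  have hcle : ∀ t, c t ≤ req t := by
    intro t
    obtain ⟨i, hi⟩ := List.mem_iff_get.1 (hcomplete t)
    rw [← hi, hc i]
    exact min_le_left _ _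
  have hrpos : ∀ t, (0:ℝ) < req t := by
    intro t; exact_mod_cast Nat.lt_of_lt_of_le Nat.zero_lt_one (hreq t)
  intro c' hc'
  simp only [← Nat.cast_min]
  -- RHS simplification: min (c t) (req t) = c t
  have hrhs : ∑ t, ((min (c t) (req t) : ℕ) : ℝ) / (req t) = ∑ t, (c t : ℝ) / (req t) := by
    apply Finset.sum_congr rfl
    intro t _
    rw [min_eq_left (hcle t)]
  rw [hrhs]
  set m : T → ℕ := fun t => min (c' t) (req t) with hm
  have hmsum : ∑ t, m t ≤ d := by
    rw [← hc']
    exact Finset.sum_le_sum (fun t _ => min_le_left _ _)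
  by_cases hall : ∀ t, c t = req t
  · -- everything fully covered
    apply Finset.sum_le_sum
    intro t _
    rw [hall t]
    gcongr
    exact min_le_right _ _
  · -- there is an unfilled topic; find first unfilled index via S
    push_neg at hall
    obtain ⟨t0, ht0⟩ := hall
    obtain ⟨iw, hiw⟩ := List.mem_iff_get.1 (hcomplete t0)
    have hwit : d < S (iw.1 + 1) := by
      have h1 := hc iw
      rw [hiw] at h1
      have hlt : c t0 < req t0 := lt_of_le_of_ne (hcle t0) ht0
      rw [hS_succ iw, hiw]
      simp only [hSdef] at h1 ⊢
      omega
    have hex : ∃ k, d < S (k + 1) := ⟨iw.1, hwit⟩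
    set i0 := Nat.find hex with hi0def
    have hP : d < S (i0 + 1) := Nat.find_spec hex
    have hnotP : ∀ k < i0, S (k + 1) ≤ d := by
      intro k hk
      have := Nat.find_min hex hk
      omega
    have hSi0 : S i0 ≤ d := by
      rcases Nat.eq_zero_or_pos i0 with h0 | h0
      · rw [h0, hS0]; omega
      · have := hnotP (i0 - 1) (by omega)
        have : S (i0 - 1 + 1) ≤ d := this
        have heq : i0 - 1 + 1 = i0 := by omega
        rwa [heq] at this
    have hi0lt : i0 < n := lt_of_le_of_lt (Nat.find_min' hex hwit) iw.2
    set R : ℕ := req (L.get ⟨i0, hi0lt⟩) with hR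
    have hRpos : (0:ℝ) < R := hrpos _
    -- sorted comparisons
    have hrel : ∀ i j : Fin n, i.1 ≤ j.1 → req (L.get i) ≤ req (L.get j) := by
      intro i j hij
      rcases lt_or_eq_of_le hij with h | h
      · exact List.Pairwise.rel_get_of_lt hsorted (by exact h)
      · have : i = j := Fin.ext h
        rw [this]
    -- per index inequality
    have hkey : ∀ i : Fin n,
        (m (L.get i) : ℝ) / req (L.get i)
          ≤ (c (L.get i) : ℝ) / req (L.get i) + ((m (L.get i) : ℝ) - c (L.get i)) / R := by
      intro i
      rcases lt_trichotomy i.1 i0 with h | h | h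
      · -- filled: c = req
        have hfull : c (L.get i) = req (L.get i) := by
          rw [hc i]
          have h1 : S (i.1 + 1) ≤ d := hnotP i.1 h
          rw [hS_succ i] at h1
          simp only [hSdef] at h1 ⊢
          omega
        apply key_frac _ _ _ _ (hrpos _) hRpos
        left
        constructor
        · rw [hfull]; exact_mod_cast min_le_right _ _
        · exact_mod_cast hrel i ⟨i0, hi0lt⟩ (le_of_lt h)
      · -- the partial topic: req = R
        have hieq : i = ⟨i0, hi0lt⟩ := by apply Fin.ext; simpa using h
        have hRi : (req (L.get i) : ℝ) = R := by rw [hieq]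
        apply key_frac _ _ _ _ (hrpos _) hRpos
        rcases le_total ((m (L.get i)) : ℝ) ((c (L.get i)) : ℝ) with hle | hle
        · exact Or.inl ⟨hle, le_of_eq hRi⟩
        · exact Or.inr ⟨hle, le_of_eq hRi.symm⟩
      · -- after partial: c = 0
        have hzero : c (L.get i) = 0 := by
          rw [hc i]
          have h1 : S (i0 + 1) ≤ S i.1 := hS_mono h
          simp only [hSdef] at h1 hP ⊢
          omega
        apply key_frac _ _ _ _ (hrpos _) hRpos
        right
        constructor
        · rw [hzero]; exact_mod_cast Nat.zero_le _
        · exact_mod_cast hrel ⟨i0, hi0lt⟩ i (le_of_lt h)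
    calc ∑ t, (m t : ℝ) / req t
        = ∑ i : Fin n, (m (L.get i) : ℝ) / req (L.get i) := hsum _
      _ ≤ ∑ i : Fin n, ((c (L.get i) : ℝ) / req (L.get i)
            + ((m (L.get i) : ℝ) - c (L.get i)) / R) :=
          Finset.sum_le_sum (fun i _ => hkey i)
      _ = ∑ i : Fin n, (c (L.get i) : ℝ) / req (L.get i)
            + (∑ i : Fin n, ((m (L.get i) : ℝ) - c (L.get i))) / R := by
          rw [Finset.sum_add_distrib, Finset.sum_div]
      _ ≤ ∑ i : Fin n, (c (L.get i) : ℝ) / req (L.get i) := by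
          have h1 : ∑ i : Fin n, ((m (L.get i) : ℝ) - c (L.get i))
              = (∑ t, (m t : ℝ)) - ∑ t, (c t : ℝ) := by
            rw [Finset.sum_sub_distrib, hsum (fun t => (m t : ℝ)), hsum (fun t => (c t : ℝ))]
          have h2 : (∑ t, (m t : ℝ)) - ∑ t, (c t : ℝ) ≤ 0 := by
            have : (∑ t, (m t : ℝ)) = ((∑ t, m t : ℕ) : ℝ) := by push_cast; ring
            have h3 : (∑ t, (c t : ℝ)) = ((∑ t, c t : ℕ) : ℝ) := by push_cast; ring
            rw [this, h3, part1]
            have : (∑ t, m t) ≤ d := hmsum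
            have := Nat.cast_le (α := ℝ).2 this
            linarith
          rw [h1]
          nlinarith [div_nonpos_of_nonpos_of_nonneg h2 hRpos.le]
      _ = ∑ t, (c t : ℝ) / req t := (hsum (fun t => (c t : ℝ) / req t)).symm
end

section
/- In the reduction from catalog segmentation to cohort selection with requirements req(s_i, t_j) = 1 if u_j ∈ S_i and req(s_i, t_j) = n·m³ otherwise, and deadline d = r ≤ m: for any student s and any schedule of length r, the floor of the student's benefit equals the number of distinct topics t appearing in the schedule with req(s,t) = 1, i.e. |S ∩ X| where X is the set of universe elements corresponding to topics in the schedule. -/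
/-- In the reduction from catalog segmentation, where a student has
requirement `1` on topics corresponding to elements of her set `Ssub` and
requirement `n·m³` on all other topics, for any schedule of length `r ≤ m`
the floor of her benefit equals the number of distinct topics of the schedule
lying in `Ssub`. -/
theorem reduction_floor_benefit (n m : ℕ) (hn : 2 ≤ n) (hm : 2 ≤ m)
    {U : Type*} [Fintype U] [DecidableEq U] (hU : Fintype.card U = m)
    (Ssub : Finset U) (r : ℕ) (hr : r ≤ m)
    (c : U → ℕ) (hc : ∑ u, c u = r) :
    ⌊∑ u, (min (c u) (if u ∈ Ssub then 1 else n * m ^ 3) : ℝ) /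
        ((if u ∈ Ssub then 1 else n * m ^ 3 : ℕ) : ℝ)⌋
      = ((Ssub ∩ Finset.univ.filter (fun u => 1 ≤ c u)).card : ℤ) := by
  have hK0 : 0 < n * m ^ 3 := by positivity
  have hmK : m < n * m ^ 3 := by
    have h1 : m ≤ m ^ 3 := Nat.le_self_pow (by norm_num) m
    calc m < 2 * m := by omega
    _ ≤ n * m ^ 3 := Nat.mul_le_mul hn h1
  have hKR : (0:ℝ) < ((n * m ^ 3 : ℕ) : ℝ) := by exact_mod_cast hK0
  rw [← Finset.sum_filter_add_sum_filter_not Finset.univ (· ∈ Ssub)]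
  have hA : ∑ u ∈ Finset.univ.filter (· ∈ Ssub),
      (min (c u) (if u ∈ Ssub then 1 else n * m ^ 3) : ℝ) /
        ((if u ∈ Ssub then 1 else n * m ^ 3 : ℕ) : ℝ)
      = ((Ssub ∩ Finset.univ.filter (fun u => 1 ≤ c u)).card : ℝ) := by
    have step : ∀ u ∈ Finset.univ.filter (· ∈ Ssub),
        (min (c u) (if u ∈ Ssub then 1 else n * m ^ 3) : ℝ) /
          ((if u ∈ Ssub then 1 else n * m ^ 3 : ℕ) : ℝ)
        = if 1 ≤ c u then (1:ℝ) else 0 := by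
      intro u hu
      simp only [Finset.mem_filter] at hu
      simp only [hu.2, if_true, Nat.cast_one, div_one]
      rcases Nat.eq_zero_or_pos (c u) with h | h
      · simp [h]
      · have h1 : 1 ≤ c u := h
        have : min ((c u : ℝ)) 1 = 1 := by
          apply min_eq_right
          exact_mod_cast h1
        simp [this, h1]
    rw [Finset.sum_congr rfl step, Finset.sum_boole]
    congr 1
    rw [Finset.filter_filter]
    congr 1
    ext u
    simp [Finset.mem_filter, Finset.mem_inter, and_comm]
  rw [hA]
  set B := ∑ u ∈ Finset.univ.filter (· ∉ Ssub),
      (min (c u) (if u ∈ Ssub then 1 else n * m ^ 3) : ℝ) /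
        ((if u ∈ Ssub then 1 else n * m ^ 3 : ℕ) : ℝ) with hBdef
  have hB0 : 0 ≤ B := by
    apply Finset.sum_nonneg
    intro u hu
    apply div_nonneg
    · apply le_min
      · positivity
      · split <;> positivity
    · positivity
  have hB1 : B < 1 := by
    have hle : B ≤ (r : ℝ) / ((n * m ^ 3 : ℕ) : ℝ) := by
      have hsplit : (r : ℝ) / ((n * m ^ 3 : ℕ) : ℝ)
          = ∑ u ∈ Finset.univ.filter (· ∉ Ssub), (c u : ℝ) / ((n * m ^ 3 : ℕ) : ℝ)
            + ∑ u ∈ Finset.univ.filter (· ∈ Ssub), (c u : ℝ) / ((n * m ^ 3 : ℕ) : ℝ) := by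
        rw [← Finset.sum_div, ← Finset.sum_div, ← add_div,
          ← Nat.cast_sum, ← Nat.cast_sum, ← Nat.cast_add]
        congr 2
        rw [Nat.add_comm, Finset.sum_filter_add_sum_filter_not, hc]
      rw [hsplit]
      have h2 : (0:ℝ) ≤ ∑ u ∈ Finset.univ.filter (· ∈ Ssub), (c u : ℝ) / ((n * m ^ 3 : ℕ) : ℝ) := by
        apply Finset.sum_nonneg; intro u hu; positivity
      refine le_add_of_le_of_nonneg (Finset.sum_le_sum fun u hu => ?_) h2
      simp only [Finset.mem_filter] at hu
      simp only [hu.2, if_false]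
      gcongr
      · exact min_le_left _ _
    have hlt : (r : ℝ) / ((n * m ^ 3 : ℕ) : ℝ) < 1 := by
      rw [div_lt_one hKR]
      exact_mod_cast lt_of_le_of_lt hr hmK
    linarith
  rw [show ((Ssub ∩ Finset.univ.filter (fun u => 1 ≤ c u)).card : ℝ)
      = (((Ssub ∩ Finset.univ.filter (fun u => 1 ≤ c u)).card : ℤ) : ℝ) by push_cast; ring,
    Int.floor_intCast_add, Int.floor_eq_zero_iff.mpr ⟨hB0, hB1⟩, add_zero]
end

section
/- If every student has requirement 1 for every topic in a set T₀ ⊆ T and requirement M for all other topics, where M > d, then any benefit-optimal schedule of length d ≤ |T₀| for a nonempty group uses only topics from T₀, each at most once, and achieves benefit |P|·d. -/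
/-- If every student has requirement `1` on topics in `T₀` and a huge
requirement `M` elsewhere, then any benefit-optimal schedule of length
`d ≤ |T₀|` for a nonempty group uses only topics from `T₀`, each at most once,
and achieves benefit `|P|·d`. -/
theorem optimal_schedule_uses_easy_topics {S T : Type*} [Fintype T] [DecidableEq T]
    (P : Finset S) (hP : P.Nonempty) (T₀ : Finset T) (d : ℕ) (hd : d ≤ T₀.card)
    (M : ℕ) (hM : d * P.card * Fintype.card T < M)
    (c : T → ℕ) (hsum : ∑ t, c t = d)
    (hopt : ∀ c' : T → ℕ, (∑ t, c' t) = d →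
      (∑ t, ∑ s ∈ P, (min (c' t) (if t ∈ T₀ then 1 else M) : ℝ) /
          ((if t ∈ T₀ then 1 else M : ℕ) : ℝ))
        ≤ ∑ t, ∑ s ∈ P, (min (c t) (if t ∈ T₀ then 1 else M) : ℝ) /
          ((if t ∈ T₀ then 1 else M : ℕ) : ℝ)) :
    (∀ t ∉ T₀, c t = 0) ∧ (∀ t, c t ≤ 1) ∧
      (∑ t, ∑ s ∈ P, (min (c t) (if t ∈ T₀ then 1 else M) : ℝ) /
          ((if t ∈ T₀ then 1 else M : ℕ) : ℝ))
        = (P.card : ℝ) * d := by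
  classical
  have hPc : 0 < P.card := hP.card_pos
  have hM0 : 0 < M := lt_of_le_of_lt (Nat.zero_le _) hM
  have hcd : ∀ t, c t ≤ d := by
    intro t
    rw [← hsum]
    exact Finset.single_le_sum (fun _ _ => Nat.zero_le _) (Finset.mem_univ t)
  have hdM : ∀ _ : T, d < M := by
    intro t
    have hT : 0 < Fintype.card T := Fintype.card_pos_iff.mpr ⟨t⟩
    have : d ≤ d * P.card * Fintype.card T :=
      le_trans (Nat.le_mul_of_pos_right d hPc) (Nat.le_mul_of_pos_right _ hT)
    exact lt_of_le_of_lt this hM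
  -- abbreviate the per-topic inner sum
  set g : (T → ℕ) → T → ℝ := fun c' t =>
    ∑ s ∈ P, (min (c' t) (if t ∈ T₀ then 1 else M) : ℝ) /
      ((if t ∈ T₀ then 1 else M : ℕ) : ℝ) with hg
  have hgval : ∀ c' t, g c' t = (P.card : ℝ) *
      ((min (c' t) (if t ∈ T₀ then 1 else M) : ℝ) / ((if t ∈ T₀ then 1 else M : ℕ) : ℝ)) := by
    intro c' t
    simp [hg, Finset.sum_const, nsmul_eq_mul]
  -- pointwise upper bound for c
  have hbound : ∀ t, g c t ≤ (P.card : ℝ) * c t := by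
    intro t
    rw [hgval]
    by_cases h : t ∈ T₀
    · simp only [h, if_true, Nat.cast_one, div_one]
      have h1 : min ((c t : ℝ)) 1 ≤ c t := min_le_left _ _
      have h2 : (0:ℝ) ≤ P.card := Nat.cast_nonneg _
      nlinarith
    · simp only [h, if_false]
      have h1 : (c t : ℝ) ≤ M := by
        exact_mod_cast le_of_lt (lt_of_le_of_lt (hcd t) (hdM t))
      rw [min_eq_left h1]
      have h2 : (c t : ℝ) / M ≤ c t := by
        apply div_le_self (Nat.cast_nonneg _)
        exact_mod_cast hM0
      have h3 : (0:ℝ) ≤ P.card := Nat.cast_nonneg _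
      nlinarith
  -- upper bound for total benefit of c
  have hub : (∑ t, g c t) ≤ (P.card : ℝ) * d := by
    calc (∑ t, g c t) ≤ ∑ t, (P.card : ℝ) * c t := Finset.sum_le_sum fun t _ => hbound t
    _ = (P.card : ℝ) * d := by
        rw [← Finset.mul_sum]
        congr 1
        exact_mod_cast congrArg (Nat.cast (R := ℝ)) hsum
  -- construct a good schedule: d distinct topics from T₀
  obtain ⟨T₁, hT₁sub, hT₁card⟩ := Finset.exists_subset_card_eq hd
  set c' : T → ℕ := fun t => if t ∈ T₁ then 1 else 0 with hc'
  have hc'sum : ∑ t, c' t = d := by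
    simp only [hc']
    rw [Finset.sum_ite_mem, Finset.univ_inter]
    simp [hT₁card]
  have hc'val : ∀ t, g c' t = if t ∈ T₁ then (P.card : ℝ) else 0 := by
    intro t
    rw [hgval]
    by_cases h : t ∈ T₁
    · have h0 : t ∈ T₀ := hT₁sub h
      simp [hc', h, h0]
    · by_cases h0 : t ∈ T₀ <;> simp [hc', h, h0]
  have hlb : (P.card : ℝ) * d ≤ ∑ t, g c t := by
    have := hopt c' hc'sum
    rw [show (∑ t, ∑ s ∈ P, (min (c' t) (if t ∈ T₀ then 1 else M) : ℝ) /
          ((if t ∈ T₀ then 1 else M : ℕ) : ℝ)) = ∑ t, g c' t from rfl] at this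
    have hval : (∑ t, g c' t) = (P.card : ℝ) * d := by
      rw [Finset.sum_congr rfl fun t _ => hc'val t, Finset.sum_ite_mem, Finset.univ_inter,
        Finset.sum_const, hT₁card, nsmul_eq_mul, mul_comm]
    linarith [this, hval.ge]
  have htot : (∑ t, g c t) = (P.card : ℝ) * d := le_antisymm hub hlb
  -- pointwise equality
  have heqsum : (∑ t, g c t) = ∑ t, (P.card : ℝ) * c t := by
    rw [htot, ← Finset.mul_sum]
    congr 1
    exact_mod_cast (congrArg (Nat.cast (R := ℝ)) hsum).symm
  have heq : ∀ t, g c t = (P.card : ℝ) * c t := by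
    intro t
    have := (Finset.sum_eq_sum_iff_of_le (fun t _ => hbound t)).mp heqsum
    exact this t (Finset.mem_univ t)
  have hPcR : (0:ℝ) < P.card := by exact_mod_cast hPc
  -- off T₀: c t = 0
  have hzero : ∀ t ∉ T₀, c t = 0 := by
    intro t ht
    have := heq t
    rw [hgval] at this
    simp only [ht, if_false] at this
    have h1 : (c t : ℝ) ≤ M := by
      exact_mod_cast le_of_lt (lt_of_le_of_lt (hcd t) (hdM t))
    rw [min_eq_left h1] at this
    have h2 : (c t : ℝ) / M = c t := by
      have := mul_left_cancel₀ (ne_of_gt hPcR) this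
      exact this
    by_contra hne
    have hc1 : 1 ≤ c t := Nat.one_le_iff_ne_zero.mpr hne
    have hcR : (1:ℝ) ≤ c t := by exact_mod_cast hc1
    have hMgt : (1:ℝ) < M := by
      have : c t < M := lt_of_le_of_lt (hcd t) (hdM t)
      have : (c t : ℝ) < M := by exact_mod_cast this
      linarith
    have : (c t : ℝ) / M < c t := div_lt_self (by linarith) hMgt
    linarith
  -- on T₀: c t ≤ 1
  have hone : ∀ t, c t ≤ 1 := by
    intro t
    by_cases ht : t ∈ T₀
    · have := heq t
      rw [hgval] at this
      simp only [ht, if_true, Nat.cast_one, div_one] at this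
      have h2 : min ((c t : ℝ)) 1 = c t := mul_left_cancel₀ (ne_of_gt hPcR) this
      have h3 : (c t : ℝ) ≤ 1 := by
        rw [← h2]; exact min_le_right _ _
      exact_mod_cast h3
    · rw [hzero t ht]; exact Nat.zero_le _
  exact ⟨hzero, hone, htot⟩
end
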